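/- Let ax = ∀i1 ⋯ ∀ik φ be a universal axiom and P a program. A trace σ ∈ events(P)^perm satisfies ax if and only if for every injective assignment s of the variables of ax to instructions of P, the subsequence of σ consisting of the events in s(E(ax)), viewed as a linear μhb graph on those events, satisfies φ under s. -/

import Mathlib

namespace USpec

/-- An instruction: its core identifier, its label (index in the instruction
stream), and its operation. -/
structure Instr (Core Op : Type) where
  core : Core
  lbl  : ℕ
  op   : Op
  deriving DecidableEq

/-- An event `i.st`: instruction `i` performing at stage `st`. -/
structure Event (Core Stage Op : Type) where
  instr : Instr Core Op
  stage : Stage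
  deriving DecidableEq

/-- A program: a finite instruction stream for each core. -/
abbrev Program (Core Op : Type) := Core → List Op

/-- The set of instructions of a program. -/
def instrs {Core Op : Type} (P : Program Core Op) : Set (Instr Core Op) :=
  {i | (P i.core)[i.lbl]? = some i.op}

/-- The events generated by a set of instructions. -/
def eventsOf {Core Op : Type} (Stage : Type) (I : Set (Instr Core Op)) :
    Set (Event Core Stage Op) :=
  {e | e.instr ∈ I}

/-- The set of events of a program: one event per instruction and stage. -/
def events {Core Op : Type} (Stage : Type) (P : Program Core Op) :
    Set (Event Core Stage Op) :=
  eventsOf Stage (instrs P)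

/-- Reference (program) order on instructions: same core, smaller label. -/
def refLt {Core Op : Type} (i' i : Instr Core Op) : Prop :=
  i'.core = i.core ∧ i'.lbl < i.lbl

/-- Quantifier-free part of a universal μspec axiom with `k` quantified
instruction variables: Boolean combinations of reference-order atoms,
happens-before atoms, and predicate-application atoms. -/
inductive Phi (k : ℕ) (Stage PSym : Type) (ar : PSym → ℕ) : Type
  | refOrd (a b : Fin k)
  | hb (a : Fin k) (st : Stage) (b : Fin k) (st' : Stage)
  | pred (p : PSym) (args : Fin (ar p) → Fin k)
  | conj (φ ψ : Phi k Stage PSym ar)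
  | disj (φ ψ : Phi k Stage PSym ar)
  | neg (φ : Phi k Stage PSym ar)

/-- A universal axiom `∀ i1 ⋯ ∀ ik, φ(i1,…,ik)`. -/
structure UAxiom (Stage PSym : Type) (ar : PSym → ℕ) where
  k : ℕ
  phi : Phi k Stage PSym ar

/-- Evaluation of the quantifier-free part `φ` under an assignment `s` of the
variables to instructions, where `R` is the happens-before relation (the
transitive closure of the edges of the graph under consideration) and
`interp` interprets the predicate symbols over operations. -/
def Sat {Core Stage Op PSym : Type} {ar : PSym → ℕ} {k : ℕ}
    (interp : ∀ p : PSym, (Fin (ar p) → Op) → Prop)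
    (R : Event Core Stage Op → Event Core Stage Op → Prop)
    (s : Fin k → Instr Core Op) : Phi k Stage PSym ar → Prop
  | .refOrd a b => refLt (s a) (s b)
  | .hb a st b st' => R ⟨s a, st⟩ ⟨s b, st'⟩
  | .pred p args => interp p fun j => (s (args j)).op
  | .conj φ ψ => Sat interp R s φ ∧ Sat interp R s ψ
  | .disj φ ψ => Sat interp R s φ ∨ Sat interp R s ψ
  | .neg φ => ¬ Sat interp R s φ

/-- Satisfaction of a universal axiom relative to an instruction set `I` and a
happens-before relation `R`: the body must hold for every injective assignment
of the variables to instructions of `I`. -/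
def SatAx {Core Stage Op PSym : Type} {ar : PSym → ℕ}
    (interp : ∀ p : PSym, (Fin (ar p) → Op) → Prop)
    (I : Set (Instr Core Op))
    (R : Event Core Stage Op → Event Core Stage Op → Prop)
    (ax : UAxiom Stage PSym ar) : Prop :=
  ∀ s : Fin ax.k → Instr Core Op, Function.Injective s → (∀ a, s a ∈ I) →
    Sat interp R s ax.phi

/-- Acyclicity of an edge relation. -/
def Acyclic {α : Type} (E : α → α → Prop) : Prop :=
  ∀ x, ¬ Relation.TransGen E x x

/-- `E` is (the edge relation of) a μhb graph on vertex set `V`: all edges are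
between vertices of `V` and the graph is acyclic (a DAG). -/
def IsMuHb {Core Stage Op : Type} (V : Set (Event Core Stage Op))
    (E : Event Core Stage Op → Event Core Stage Op → Prop) : Prop :=
  (∀ e1 e2, E e1 e2 → e1 ∈ V ∧ e2 ∈ V) ∧ Acyclic E

/-- Satisfaction of a universal axiom by a μhb graph (with edges `E`) relative
to an instruction set `I`: happens-before is the transitive closure of `E`. -/
def GraphSatAx {Core Stage Op PSym : Type} {ar : PSym → ℕ}
    (interp : ∀ p : PSym, (Fin (ar p) → Op) → Prop)
    (I : Set (Instr Core Op))
    (E : Event Core Stage Op → Event Core Stage Op → Prop)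
    (ax : UAxiom Stage PSym ar) : Prop :=
  SatAx interp I (Relation.TransGen E) ax

/-- `G ⊨_P A`: the μhb graph with edges `E` satisfies every axiom of the
axiomatic semantics `A` for program `P`. -/
def Models {Core Stage Op PSym : Type} {ar : PSym → ℕ}
    (interp : ∀ p : PSym, (Fin (ar p) → Op) → Prop)
    (P : Program Core Op)
    (E : Event Core Stage Op → Event Core Stage Op → Prop)
    (A : List (UAxiom Stage PSym ar)) : Prop :=
  ∀ ax ∈ A, GraphSatAx interp (instrs P) E ax

/-- `G ⊑ G'` (on a common vertex set): `E⁺ ⊆ E'⁺`. -/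
def Refines {Core Stage Op : Type}
    (E E' : Event Core Stage Op → Event Core Stage Op → Prop) : Prop :=
  ∀ e1 e2, Relation.TransGen E e1 e2 → Relation.TransGen E' e1 e2

/-- A graph is linear on `V` if its transitive closure totally orders `V`. -/
def Linear {Core Stage Op : Type} (V : Set (Event Core Stage Op))
    (E : Event Core Stage Op → Event Core Stage Op → Prop) : Prop :=
  ∀ e1 ∈ V, ∀ e2 ∈ V, e1 ≠ e2 →
    Relation.TransGen E e1 e2 ∨ Relation.TransGen E e2 e1

/-- Refinability of an axiomatic semantics: for every program, every
linearization of a valid μhb graph is valid. -/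
def Refinable {Core Stage Op PSym : Type} {ar : PSym → ℕ}
    (interp : ∀ p : PSym, (Fin (ar p) → Op) → Prop)
    (A : List (UAxiom Stage PSym ar)) : Prop :=
  ∀ (P : Program Core Op)
    (E E' : Event Core Stage Op → Event Core Stage Op → Prop),
    IsMuHb (events Stage P) E → Models interp P E A →
    IsMuHb (events Stage P) E' → Linear (events Stage P) E' → Refines E E' →
    Models interp P E' A

/-- The strict order of a list: `x` occurs (at some position) strictly before
`y`.  For a duplicate-free list this is the happens-before relation of the
linear μhb graph `σ[0] → σ[1] → ⋯`. -/
def listEdge {α : Type} (σ : List α) (x y : α) : Prop :=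
  ∃ m n : ℕ, m < n ∧ σ[m]? = some x ∧ σ[n]? = some y

/-- `σ ∈ events(P)^perm`: the word `σ` contains each event of `P` exactly
once. -/
def IsPermTrace {Core Stage Op : Type} (P : Program Core Op)
    (σ : List (Event Core Stage Op)) : Prop :=
  σ.Nodup ∧ ∀ e, e ∈ σ ↔ e ∈ events Stage P

/-- `σ` is a linearization of the μhb graph with edges `E` on `events(P)`. -/
def IsLinearization {Core Stage Op : Type} (P : Program Core Op)
    (E : Event Core Stage Op → Event Core Stage Op → Prop)
    (σ : List (Event Core Stage Op)) : Prop :=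
  IsPermTrace P σ ∧ ∀ e1 e2, Relation.TransGen E e1 e2 → listEdge σ e1 e2

/-- Satisfaction of an axiomatic semantics by a trace `σ`, viewed as the
linear μhb graph `σ[0] → σ[1] → ⋯`. -/
def TraceModels {Core Stage Op PSym : Type} {ar : PSym → ℕ}
    (interp : ∀ p : PSym, (Fin (ar p) → Op) → Prop)
    (P : Program Core Op) (σ : List (Event Core Stage Op))
    (A : List (UAxiom Stage PSym ar)) : Prop :=
  ∀ ax ∈ A, SatAx interp (instrs P) (listEdge σ) ax

/-- **Trace satisfaction is determined by the per-assignment subsequences**: a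
trace `σ ∈ events(P)^perm` satisfies the universal axiom `ax = ∀ i1 ⋯ ik, φ`
iff for every injective assignment `s` of the variables of `ax` to
instructions of `P`, the subsequence of `σ` consisting of the events in
`s(E(ax))`, viewed as a linear μhb graph, satisfies `φ` under `s`. -/
lemma decomp_of_getElem? {α : Type} {l : List α} {n : ℕ} {x : α}
    (h : l[n]? = some x) : ∃ l1 l2, l = l1 ++ x :: l2 ∧ l1.length = n := by
  induction n generalizing l with
  | zero =>
    cases l with
    | nil => simp at h
    | cons a t => simp at h; exact ⟨[], t, by simp [h], rfl⟩
  | succ n ih =>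
    cases l with
    | nil => simp at h
    | cons a t =>
      simp at h
      obtain ⟨l1, l2, rfl, hlen⟩ := ih h
      exact ⟨a :: l1, l2, rfl, by simp [hlen]⟩

lemma listEdge_iff_decomp {α : Type} (l : List α) (x y : α) :
    listEdge l x y ↔ ∃ l1 l2 l3, l = l1 ++ x :: (l2 ++ y :: l3) := by
  constructor
  · rintro ⟨m, n, hmn, hx, hy⟩
    obtain ⟨l1, r, rfl, hlen⟩ := decomp_of_getElem? hx
    have hy' : r[n - m - 1]? = some y := by
      rw [List.getElem?_append_right (by omega)] at hy
      rw [List.getElem?_cons] at hy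
      simp only [hlen] at hy
      have : n - m ≠ 0 := by omega
      rw [if_neg this] at hy
      exact hy
    obtain ⟨l2, l3, rfl, _⟩ := decomp_of_getElem? hy'
    exact ⟨l1, l2, l3, rfl⟩
  · rintro ⟨l1, l2, l3, rfl⟩
    refine ⟨l1.length, l1.length + 1 + l2.length, by omega, ?_, ?_⟩
    · rw [List.getElem?_append_right le_rfl]
      simp
    · rw [List.getElem?_append_right (by omega)]
      rw [List.getElem?_cons]
      rw [if_neg (by omega)]
      have h2 : l1.length + 1 + l2.length - l1.length - 1 = l2.length := by omega
      rw [h2, List.getElem?_append_right le_rfl]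
      simp

lemma listEdge_asymm {α : Type} {l : List α} (hnd : l.Nodup) {x y : α}
    (h1 : listEdge l x y) (h2 : listEdge l y x) : False := by
  obtain ⟨m, n, hmn, hx, hy⟩ := h1
  obtain ⟨m', n', hmn', hy', hx'⟩ := h2
  have hm := List.getElem?_eq_some_iff.mp hx
  have hn := List.getElem?_eq_some_iff.mp hy
  have hm' := List.getElem?_eq_some_iff.mp hy'
  have hn' := List.getElem?_eq_some_iff.mp hx'
  obtain ⟨hml, hmv⟩ := hm
  obtain ⟨hnl, hnv⟩ := hn
  obtain ⟨hml', hmv'⟩ := hm'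
  obtain ⟨hnl', hnv'⟩ := hn'
  have e1 : m = n' := by
    have : l[m]'hml = l[n']'hnl' := by rw [hmv, hnv']
    exact (List.Nodup.getElem_inj_iff hnd).mp this
  have e2 : n = m' := by
    have : l[n]'hnl = l[m']'hml' := by rw [hnv, hmv']
    exact (List.Nodup.getElem_inj_iff hnd).mp this
  omega

lemma listEdge_total {α : Type} {l : List α} {x y : α}
    (hx : x ∈ l) (hy : y ∈ l) (hxy : x ≠ y) :
    listEdge l x y ∨ listEdge l y x := by
  obtain ⟨m, hm, hmv⟩ := List.getElem_of_mem hx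
  obtain ⟨n, hn, hnv⟩ := List.getElem_of_mem hy
  have hmn : m ≠ n := by
    rintro rfl; exact hxy (hmv ▸ hnv ▸ rfl)
  rcases lt_or_gt_of_ne hmn with h | h
  · exact Or.inl ⟨m, n, h, by simp [List.getElem?_eq_some_iff, hm, hmv],
      by simp [List.getElem?_eq_some_iff, hn, hnv]⟩
  · exact Or.inr ⟨n, m, h, by simp [List.getElem?_eq_some_iff, hn, hnv],
      by simp [List.getElem?_eq_some_iff, hm, hmv]⟩

lemma listEdge_filter {α : Type} (p : α → Bool) (l : List α) (hnd : l.Nodup)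
    {x y : α} (hx : p x = true) (hy : p y = true) :
    listEdge (l.filter p) x y ↔ listEdge l x y := by
  have back : ∀ a b : α, p a = true → p b = true →
      listEdge l a b → listEdge (l.filter p) a b := by
    intro a b ha hb h
    obtain ⟨l1, l2, l3, rfl⟩ := (listEdge_iff_decomp l a b).mp h
    refine (listEdge_iff_decomp _ a b).mpr
      ⟨l1.filter p, l2.filter p, l3.filter p, ?_⟩
    simp [List.filter_append, List.filter_cons, ha, hb]
  constructor
  · intro h
    have hmemx : x ∈ l := by
      obtain ⟨l1, l2, l3, hdec⟩ := (listEdge_iff_decomp _ x y).mp h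
      have : x ∈ l.filter p := by rw [hdec]; simp
      exact List.mem_of_mem_filter this
    have hmemy : y ∈ l := by
      obtain ⟨l1, l2, l3, hdec⟩ := (listEdge_iff_decomp _ x y).mp h
      have : y ∈ l.filter p := by rw [hdec]; simp
      exact List.mem_of_mem_filter this
    have hndf : (l.filter p).Nodup := hnd.filter p
    have hxy : x ≠ y := by
      rintro rfl
      exact listEdge_asymm hndf h h
    rcases listEdge_total hmemx hmemy hxy with h' | h'
    · exact h'
    · exact absurd (back y x hy hx h') fun hc => listEdge_asymm hndf h hc
  · exact back x y hx hy

theorem trace_sat_iff_subsequences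
    {Core Stage Op PSym : Type} [DecidableEq Core] [DecidableEq Op]
    {ar : PSym → ℕ} (interp : ∀ p : PSym, (Fin (ar p) → Op) → Prop)
    (ax : UAxiom Stage PSym ar) (P : Program Core Op)
    (σ : List (Event Core Stage Op)) (hperm : IsPermTrace P σ) :
    SatAx interp (instrs P) (listEdge σ) ax ↔
      ∀ s : Fin ax.k → Instr Core Op, Function.Injective s →
        (∀ a, s a ∈ instrs P) →
        Sat interp
          (listEdge (σ.filter fun e => decide (∃ a, s a = e.instr))) s
          ax.phi := by
  have key : ∀ (s : Fin ax.k → Instr Core Op) (φ : Phi ax.k Stage PSym ar),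
      Sat interp (listEdge σ) s φ ↔
      Sat interp
        (listEdge (σ.filter fun e => decide (∃ a, s a = e.instr))) s φ := by
    intro s φ
    induction φ with
    | refOrd a b => rfl
    | hb a st b st' =>
      exact (listEdge_filter _ σ hperm.1
        (by simp) (by simp)).symm
    | pred p args => rfl
    | conj φ ψ ihφ ihψ => exact and_congr ihφ ihψ
    | disj φ ψ ihφ ihψ => exact or_congr ihφ ihψ
    | neg φ ihφ => exact not_congr ihφ
  constructor
  · intro h s hs hmem
    exact (key s ax.phi).mp (h s hs hmem)
  · intro h s hs hmem
    exact (key s ax.phi).mpr (h s hs hmem)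

end USpec
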